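/- Let K be an algebraically closed field, Q a finite connected acyclic quiver with n vertices, A = KQ its path algebra, and B = K·1_A + rad A the primary arrow subalgebra. Then there is an isomorphism of A-B-bimodules A ⊗_B A ≅ A ⊕ ⨁_{i=1}^{n} (n-1)·(_i K_ε), where _i K_ε denotes the one-dimensional A-B-bimodule K on which A acts via the augmentation ρ_i (projection onto the coefficient of the stationary path ε_i modulo rad A) and B acts via the augmentation ε : B → B/rad B ≅ K. In particular, as B-B-bimodules A ⊗_B A ≅ A ⊕ n(n-1)·(_ε K_ε). -/

import Mathlib

/-! # Depth of subring extensions (Kadison–Young)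
For a unital subring `B ⊆ A`, `CC B n` realizes the `n`-fold relative tensor power
`C_n(A,B) = A ⊗_B ⋯ ⊗_B A` (with `C_0(A,B) = B`) as a quotient of the iterated
tensor power over `ℤ` by the middle `B`-balancing relations, together with its
natural left/right `A`- and `B`-actions.  Bimodule maps, the divisibility relation
`M ∣ q ⬝ N`, H-equivalence, the depth conditions and the minimum depth `d(B,A) ∈ ℕ∞`
are then defined exactly as in the paper. -/

open TensorProduct

universe u

variable (A : Type u) [Ring A]

/-- `Tpow A n` is the `(n+1)`-fold tensor power `A ⊗ℤ ⋯ ⊗ℤ A`. -/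
noncomputable def Tpow : ℕ → ModuleCat.{u} ℤ
  | 0 => ModuleCat.of ℤ A
  | n + 1 => ModuleCat.of ℤ (A ⊗[ℤ] (Tpow n : Type u))

/-- Multiplication by `a : A` on the leftmost tensor factor. -/
noncomputable def lmulT (a : A) : ∀ n, (Tpow A n : Type u) →ₗ[ℤ] (Tpow A n : Type u)
  | 0 => (LinearMap.mulLeft ℤ a : A →ₗ[ℤ] A)
  | n + 1 => LinearMap.rTensor (Tpow A n : Type u) (LinearMap.mulLeft ℤ a)

/-- Multiplication by `a : A` on the rightmost tensor factor. -/
noncomputable def rmulT (a : A) : ∀ n, (Tpow A n : Type u) →ₗ[ℤ] (Tpow A n : Type u)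
  | 0 => (LinearMap.mulRight ℤ a : A →ₗ[ℤ] A)
  | n + 1 => LinearMap.lTensor A (rmulT a n)

private theorem lmulT_succ_apply (a : A) (n : ℕ) (x : A ⊗[ℤ] (Tpow A n : Type u)) :
    lmulT A a (n+1) x = LinearMap.rTensor (Tpow A n : Type u) (LinearMap.mulLeft ℤ a) x := rfl

private theorem rmulT_succ_apply (a : A) (n : ℕ) (x : A ⊗[ℤ] (Tpow A n : Type u)) :
    rmulT A a (n+1) x = LinearMap.lTensor A (rmulT A a n) x := rfl

private theorem auxcomm (M : Type u) [AddCommGroup M] [Module ℤ M] (a : A) (g : M →ₗ[ℤ] M)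
    (x : A ⊗[ℤ] M) :
    (LinearMap.rTensor M (LinearMap.mulLeft ℤ a)) ((LinearMap.lTensor A g) x) =
    (LinearMap.lTensor A g) ((LinearMap.rTensor M (LinearMap.mulLeft ℤ a)) x) := by
  induction x using TensorProduct.induction_on with
  | zero => simp
  | tmul c t => simp
  | add y z hy hz => simp only [map_add, hy, hz]

theorem lmulT_rmulT_comm (a b : A) : ∀ (n : ℕ) (x : (Tpow A n : Type u)),
    lmulT A a n (rmulT A b n x) = rmulT A b n (lmulT A a n x)
  | 0, x => (mul_assoc a x b).symm
  | n + 1, x => by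
    show (lmulT A a (n+1)) ((rmulT A b (n+1)) x) = (rmulT A b (n+1)) ((lmulT A a (n+1)) x)
    rw [lmulT, rmulT]
    exact auxcomm A (Tpow A n : Type u) a (rmulT A b n) x

private theorem aux1 (M : Type u) [AddCommGroup M] [Module ℤ M] (a c d : A) (t s : M) :
    LinearMap.rTensor M (LinearMap.mulLeft ℤ a) (c ⊗ₜ[ℤ] t - d ⊗ₜ[ℤ] s) =
      (a * c) ⊗ₜ[ℤ] t - (a * d) ⊗ₜ[ℤ] s := by simp

private theorem aux2 (M : Type u) [AddCommGroup M] [Module ℤ M] (g : M →ₗ[ℤ] M) (c d : A)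
    (t s : M) :
    LinearMap.lTensor A g (c ⊗ₜ[ℤ] t - d ⊗ₜ[ℤ] s) = c ⊗ₜ[ℤ] (g t) - d ⊗ₜ[ℤ] (g s) := by simp

private theorem aux3 (M : Type u) [AddCommGroup M] [Module ℤ M] (a c : A) (t : M) :
    LinearMap.rTensor M (LinearMap.mulLeft ℤ a) (c ⊗ₜ[ℤ] t) = (a * c) ⊗ₜ[ℤ] t := by simp

private theorem aux4 (M : Type u) [AddCommGroup M] [Module ℤ M] (g : M →ₗ[ℤ] M) (c : A) (t : M) :
    LinearMap.lTensor A g (c ⊗ₜ[ℤ] t) = c ⊗ₜ[ℤ] (g t) := by simp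


variable {A}

/-- The `B`-balancing relations inside `Tpow A n`. -/
noncomputable def rel (B : Subring A) : ∀ n, Submodule ℤ (Tpow A n : Type u)
  | 0 => ⊥
  | n + 1 =>
      Submodule.span ℤ
        {x : (Tpow A (n+1) : Type u) |
          (∃ (a : A) (b : B) (t : (Tpow A n : Type u)),
            x = ((a * (b : A)) ⊗ₜ[ℤ] t : A ⊗[ℤ] (Tpow A n : Type u)) -
                 a ⊗ₜ[ℤ] (lmulT A (b : A) n t)) ∨
          (∃ (a : A) (r : (Tpow A n : Type u)), r ∈ rel B n ∧
            x = (a ⊗ₜ[ℤ] r : A ⊗[ℤ] (Tpow A n : Type u)))}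

theorem rel_succ (B : Subring A) (n : ℕ) :
    rel B (n+1) =
      Submodule.span ℤ
        {x : (Tpow A (n+1) : Type u) |
          (∃ (a : A) (b : B) (t : (Tpow A n : Type u)),
            x = ((a * (b : A)) ⊗ₜ[ℤ] t : A ⊗[ℤ] (Tpow A n : Type u)) -
                 a ⊗ₜ[ℤ] (lmulT A (b : A) n t)) ∨
          (∃ (a : A) (r : (Tpow A n : Type u)), r ∈ rel B n ∧
            x = (a ⊗ₜ[ℤ] r : A ⊗[ℤ] (Tpow A n : Type u)))} := rfl

theorem rel_le_comap_lmulT (B : Subring A) (a : A) :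
    ∀ n, rel B n ≤ (rel B n).comap (lmulT A a n)
  | 0 => bot_le
  | n + 1 => by
    rw [rel_succ, Submodule.span_le]
    intro x hx
    change lmulT A a (n+1) x ∈ Submodule.span ℤ _
    rcases hx with (⟨a', b, t, rfl⟩ | ⟨a', r, hr, rfl⟩) <;> rw [lmulT_succ_apply]
    · rw [map_sub, LinearMap.rTensor_tmul, LinearMap.rTensor_tmul, LinearMap.mulLeft_apply,
        LinearMap.mulLeft_apply]
      refine Submodule.subset_span (Or.inl ⟨a * a', b, t, ?_⟩)
      rw [mul_assoc]
    · rw [LinearMap.rTensor_tmul, LinearMap.mulLeft_apply]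
      exact Submodule.subset_span (Or.inr ⟨a * a', r, hr, rfl⟩)

theorem rel_le_comap_rmulT (B : Subring A) (a : A) :
    ∀ n, rel B n ≤ (rel B n).comap (rmulT A a n)
  | 0 => bot_le
  | n + 1 => by
    rw [rel_succ, Submodule.span_le]
    intro x hx
    change rmulT A a (n+1) x ∈ Submodule.span ℤ _
    rcases hx with (⟨a', b, t, rfl⟩ | ⟨a', r, hr, rfl⟩) <;> rw [rmulT_succ_apply]
    · rw [map_sub, LinearMap.lTensor_tmul, LinearMap.lTensor_tmul, ← lmulT_rmulT_comm]
      exact Submodule.subset_span (Or.inl ⟨a', b, rmulT A a n t, rfl⟩)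
    · rw [LinearMap.lTensor_tmul]
      exact Submodule.subset_span
        (Or.inr ⟨a', rmulT A a n r, rel_le_comap_rmulT B a n hr, rfl⟩)

/-- `CC B n` is `C_n(A,B) = A ⊗_B ⋯ ⊗_B A` (`n` factors of `A`), with `CC B 0 = B`. -/
noncomputable def CC (B : Subring A) : ℕ → ModuleCat.{u} ℤ
  | 0 => ModuleCat.of ℤ B
  | n + 1 => ModuleCat.of ℤ ((Tpow A n : Type u) ⧸ rel B n)

/-- The left `A`-action on `C_{n+1}(A,B)`. -/
noncomputable def lA (B : Subring A) (a : A) (n : ℕ) :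
    (CC B (n+1) : Type u) →ₗ[ℤ] (CC B (n+1) : Type u) :=
  (Submodule.mapQ _ _ (lmulT A a n) (rel_le_comap_lmulT B a n) :
    ((Tpow A n : Type u) ⧸ rel B n) →ₗ[ℤ] ((Tpow A n : Type u) ⧸ rel B n))

/-- The right `A`-action on `C_{n+1}(A,B)`. -/
noncomputable def rA (B : Subring A) (a : A) (n : ℕ) :
    (CC B (n+1) : Type u) →ₗ[ℤ] (CC B (n+1) : Type u) :=
  (Submodule.mapQ _ _ (rmulT A a n) (rel_le_comap_rmulT B a n) :
    ((Tpow A n : Type u) ⧸ rel B n) →ₗ[ℤ] ((Tpow A n : Type u) ⧸ rel B n))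

/-- The left `B`-action on `C_n(A,B)`. -/
noncomputable def lB (B : Subring A) (b : B) : ∀ n, (CC B n : Type u) →ₗ[ℤ] (CC B n : Type u)
  | 0 => (LinearMap.mulLeft ℤ b : B →ₗ[ℤ] B)
  | n + 1 => lA B (b : A) n

/-- The right `B`-action on `C_n(A,B)`. -/
noncomputable def rB (B : Subring A) (b : B) : ∀ n, (CC B n : Type u) →ₗ[ℤ] (CC B n : Type u)
  | 0 => (LinearMap.mulRight ℤ b : B →ₗ[ℤ] B)
  | n + 1 => rA B (b : A) n

/-- `f` is a morphism of `B`-`B`-bimodules `C_m(A,B) → C_n(A,B)`. -/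
def IsBBHom (B : Subring A) {m n : ℕ} (f : (CC B m : Type u) →ₗ[ℤ] (CC B n : Type u)) : Prop :=
  ∀ b : B, (∀ x, f (lB B b m x) = lB B b n (f x)) ∧ (∀ x, f (rB B b m x) = rB B b n (f x))

/-- `f` is a morphism of `A`-`B`-bimodules `C_{m+1}(A,B) → C_{n+1}(A,B)`. -/
def IsABHom (B : Subring A) {m n : ℕ}
    (f : (CC B (m+1) : Type u) →ₗ[ℤ] (CC B (n+1) : Type u)) : Prop :=
  (∀ (a : A) x, f (lA B a m x) = lA B a n (f x)) ∧
  (∀ (b : B) x, f (rB B b (m+1) x) = rB B b (n+1) (f x))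

/-- `f` is a morphism of `B`-`A`-bimodules `C_{m+1}(A,B) → C_{n+1}(A,B)`. -/
def IsBAHom (B : Subring A) {m n : ℕ}
    (f : (CC B (m+1) : Type u) →ₗ[ℤ] (CC B (n+1) : Type u)) : Prop :=
  (∀ (b : B) x, f (lB B b (m+1) x) = lB B b (n+1) (f x)) ∧
  (∀ (a : A) x, f (rA B a m x) = rA B a n (f x))

/-- `C_m(A,B)` divides a multiple of `C_n(A,B)` as `B`-`B`-bimodules. -/
def DividesBB (B : Subring A) (m n : ℕ) : Prop :=
  ∃ (r : ℕ) (f : Fin r → ((CC B m : Type u) →ₗ[ℤ] (CC B n : Type u)))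
    (g : Fin r → ((CC B n : Type u) →ₗ[ℤ] (CC B m : Type u))),
    (∀ i, IsBBHom B (f i)) ∧ (∀ i, IsBBHom B (g i)) ∧
      ∑ i, (g i).comp (f i) = LinearMap.id

/-- `C_{m+1}(A,B)` divides a multiple of `C_{n+1}(A,B)` as `A`-`B`-bimodules. -/
def DividesAB (B : Subring A) (m n : ℕ) : Prop :=
  ∃ (r : ℕ) (f : Fin r → ((CC B (m+1) : Type u) →ₗ[ℤ] (CC B (n+1) : Type u)))
    (g : Fin r → ((CC B (n+1) : Type u) →ₗ[ℤ] (CC B (m+1) : Type u))),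
    (∀ i, IsABHom B (f i)) ∧ (∀ i, IsABHom B (g i)) ∧
      ∑ i, (g i).comp (f i) = LinearMap.id

/-- `C_{m+1}(A,B)` divides a multiple of `C_{n+1}(A,B)` as `B`-`A`-bimodules. -/
def DividesBA (B : Subring A) (m n : ℕ) : Prop :=
  ∃ (r : ℕ) (f : Fin r → ((CC B (m+1) : Type u) →ₗ[ℤ] (CC B (n+1) : Type u)))
    (g : Fin r → ((CC B (n+1) : Type u) →ₗ[ℤ] (CC B (m+1) : Type u))),
    (∀ i, IsBAHom B (f i)) ∧ (∀ i, IsBAHom B (g i)) ∧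
      ∑ i, (g i).comp (f i) = LinearMap.id

/-- H-equivalence of `C_m` and `C_n` as `B`-`B`-bimodules. -/
def HequivBB (B : Subring A) (m n : ℕ) : Prop := DividesBB B m n ∧ DividesBB B n m

/-- H-equivalence of `C_{m+1}` and `C_{n+1}` as `A`-`B`-bimodules. -/
def HequivAB (B : Subring A) (m n : ℕ) : Prop := DividesAB B m n ∧ DividesAB B n m

/-- H-equivalence of `C_{m+1}` and `C_{n+1}` as `B`-`A`-bimodules. -/
def HequivBA (B : Subring A) (m n : ℕ) : Prop := DividesBA B m n ∧ DividesBA B n m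

/-- The extension `B ⊆ A` has depth `d`: depth `2n+1` (`n ≥ 0`) means
`C_{n+1} ∼ C_n` as `B`-`B`-bimodules, and right (resp. left) depth `2n` (`n ≥ 1`)
means `C_{n+1} ∼ C_n` as `A`-`B`- (resp. `B`-`A`-) bimodules. -/
def HasDepth (B : Subring A) (d : ℕ) : Prop :=
  (∃ n : ℕ, d = 2 * n + 1 ∧ HequivBB B (n+1) n) ∨
  (∃ n : ℕ, d = 2 * (n+1) ∧ (HequivAB B (n+1) n ∨ HequivBA B (n+1) n))

/-- The minimum depth `d(B,A) ∈ ℕ∞` of the subring extension `B ⊆ A`. -/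
noncomputable def depth (B : Subring A) : ℕ∞ :=
  sInf {d : ℕ∞ | ∃ m : ℕ, HasDepth B m ∧ d = (m : ℕ∞)}

/-- The augmentation `ρ_i : A → K` of the path algebra, reading off the coefficient
of the stationary path `ε_i`. -/
noncomputable def rhoAug {K : Type u} [Field K] {V : Type u} [Quiver.{u+1} V]
    {A : Type u} [Ring A] [Algebra K A]
    (bas : Module.Basis (Σ (a : V) (b : V), Quiver.Path a b) K A) (i : V) (a : A) : K :=
  bas.repr a ⟨i, i, Quiver.Path.nil⟩


section PathAlgAux
set_option linter.unusedSectionVars false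

variable {K : Type u} [Field K]
variable {V : Type u} [Quiver.{u+1} V] [Fintype V]
variable {A : Type u} [Ring A] [Algebra K A]
variable (bas : Module.Basis (Σ (a : V) (b : V), Quiver.Path a b) K A)

private lemma sigma_nil_ne {a b i : V} (p : Quiver.Path a b) (hp : p.length ≠ 0) :
    (⟨a, b, p⟩ : Σ (a : V) (b : V), Quiver.Path a b) ≠ ⟨i, i, Quiver.Path.nil⟩ := by
  intro h
  have := congrArg (fun s : (Σ (a : V) (b : V), Quiver.Path a b) => s.2.2.length) h
  simp only [Quiver.Path.length_nil] at this
  exact hp this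

private lemma sigma_fst_eq {a b i : V} {p : Quiver.Path a b}
    (h : (⟨a, b, p⟩ : Σ (a : V) (b : V), Quiver.Path a b) = ⟨i, i, Quiver.Path.nil⟩) :
    a = i ∧ b = i := by
  refine ⟨congrArg Sigma.fst h, ?_⟩
  exact congrArg (fun s : (Σ (a : V) (b : V), Quiver.Path a b) => s.2.1) h

private lemma rho_bas_self (i : V) :
    rhoAug bas i (bas ⟨i, i, Quiver.Path.nil⟩) = 1 := by
  rw [rhoAug, Module.Basis.repr_self]; exact Finsupp.single_eq_same

private lemma rho_bas_ne {i : V} {t : Σ (a : V) (b : V), Quiver.Path a b}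
    (h : t ≠ ⟨i, i, Quiver.Path.nil⟩) : rhoAug bas i (bas t) = 0 := by
  rw [rhoAug, Module.Basis.repr_self]; exact Finsupp.single_eq_of_ne' h

private lemma rho_add (i : V) (x y : A) :
    rhoAug bas i (x + y) = rhoAug bas i x + rhoAug bas i y := by
  simp [rhoAug]

private lemma rho_smul (i : V) (c : K) (x : A) :
    rhoAug bas i (c • x) = c * rhoAug bas i x := by
  simp [rhoAug]

private lemma rho_zero (i : V) : rhoAug bas i (0 : A) = 0 := by simp [rhoAug]

end PathAlgAux

section PathAlgAux2
set_option linter.unusedSectionVars false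
set_option maxHeartbeats 1000000

variable {K : Type u} [Field K]
variable {V : Type u} [Quiver.{u+1} V] [Fintype V]
variable {A : Type u} [Ring A] [Algebra K A]
variable (bas : Module.Basis (Σ (a : V) (b : V), Quiver.Path a b) K A)

private lemma basis_ind (P : A → Prop) (h0 : P 0) (hadd : ∀ x y, P x → P y → P (x + y))
    (hsmul : ∀ (c : K) (x : A), P x → P (c • x))
    (hb : ∀ t, P (bas t)) : ∀ a : A, P a := by
  intro a
  have ha : a ∈ Submodule.span K (Set.range ⇑bas) := by rw [Module.Basis.span_eq]; trivial
  refine Submodule.span_induction ?_ h0 (fun x y _ _ => hadd x y) (fun c x _ => hsmul c x) ha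
  rintro x ⟨t, rfl⟩
  exact hb t

variable (hmul : ∀ (i j k : V) (p : Quiver.Path i j) (q : Quiver.Path j k),
      bas ⟨i, j, p⟩ * bas ⟨j, k, q⟩ = bas ⟨i, k, p.comp q⟩)
variable (hzero : ∀ (i j j' k : V) (p : Quiver.Path i j) (q : Quiver.Path j' k), j ≠ j' →
      bas ⟨i, j, p⟩ * bas ⟨j', k, q⟩ = 0)

include hmul hzero

private lemma hone : (1 : A) = ∑ i : V, bas ⟨i, i, Quiver.Path.nil⟩ := by
  classical
  set s : A := ∑ i : V, bas ⟨i, i, Quiver.Path.nil⟩ with hs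
  have h : ∀ t, s * bas t = bas t := by
    rintro ⟨i, j, p⟩
    rw [hs, Finset.sum_mul, Finset.sum_eq_single i]
    · rw [hmul, Quiver.Path.nil_comp]
    · intro b _ hb
      exact hzero b b i j Quiver.Path.nil p hb
    · intro h; exact absurd (Finset.mem_univ i) h
  have h2 : LinearMap.mulLeft K s = LinearMap.id := by
    refine Module.Basis.ext bas fun t => ?_
    rw [LinearMap.mulLeft_apply, LinearMap.id_apply, h]
  calc (1 : A) = s * 1 := by
        have := congrArg (fun f : A →ₗ[K] A => f 1) h2
        simpa using this.symm
    _ = s := mul_one s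
    _ = _ := rfl

private lemma rho_mul_bas (i : V) (t t' : Σ (a : V) (b : V), Quiver.Path a b) :
    rhoAug bas i (bas t * bas t') = rhoAug bas i (bas t) * rhoAug bas i (bas t') := by
  classical
  obtain ⟨a, b, p⟩ := t
  obtain ⟨c, d, q⟩ := t'
  by_cases hbc : b = c
  · subst hbc
    rw [hmul]
    cases p with
    | nil =>
      cases q with
      | nil =>
        rw [Quiver.Path.comp_nil]
        by_cases ha : a = i
        · subst ha; rw [rho_bas_self]; ring
        · rw [rho_bas_ne bas (fun h => ha (sigma_fst_eq h).1)]; ring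
      | cons q' f =>
        rw [rho_bas_ne bas (t := ⟨a, d, _⟩) (sigma_nil_ne _ (by
          rw [Quiver.Path.length_comp]; simp)),
          rho_bas_ne bas (t := ⟨a, d, q'.cons f⟩) (sigma_nil_ne _ (by simp))]
        ring
    | cons p' f =>
      rw [rho_bas_ne bas (t := ⟨a, d, _⟩) (sigma_nil_ne _ (by
          rw [Quiver.Path.length_comp]; simp)),
        rho_bas_ne bas (t := ⟨a, b, p'.cons f⟩) (sigma_nil_ne _ (by simp))]
      ring
  · rw [hzero _ _ _ _ _ _ hbc, rho_zero]
    by_cases h1 : (⟨a, b, p⟩ : Σ (a : V) (b : V), Quiver.Path a b) = ⟨i, i, Quiver.Path.nil⟩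
    · have hb2 : b = i := (sigma_fst_eq h1).2
      rw [rho_bas_ne bas (t := ⟨c, d, q⟩) (fun h => hbc (by
        rw [hb2, (sigma_fst_eq h).1]))]
      ring
    · rw [rho_bas_ne bas h1]; ring

private lemma rho_mul (i : V) (x y : A) :
    rhoAug bas i (x * y) = rhoAug bas i x * rhoAug bas i y := by
  induction x using basis_ind bas with
  | h0 => simp [rho_zero]
  | hadd u v hu hv => rw [add_mul, rho_add, rho_add, hu, hv]; ring
  | hsmul c u hu => rw [smul_mul_assoc, rho_smul, rho_smul, hu]; ring
  | hb t =>
    induction y using basis_ind bas with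
    | h0 => simp [rho_zero]
    | hadd u v hu hv => rw [mul_add, rho_add, rho_add, hu, hv]; ring
    | hsmul c u hu => rw [mul_smul_comm, rho_smul, rho_smul, hu]; ring
    | hb t' => exact rho_mul_bas bas hmul hzero i t t'

private lemma rho_one (i : V) : rhoAug bas i (1 : A) = 1 := by
  classical
  rw [hone bas hmul hzero]
  have : rhoAug bas i (∑ b : V, bas ⟨b, b, Quiver.Path.nil⟩)
      = ∑ b : V, rhoAug bas i (bas ⟨b, b, Quiver.Path.nil⟩) := by
    simp [rhoAug]
  rw [this, Finset.sum_eq_single i]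
  · exact rho_bas_self bas i
  · intro b _ hb
    exact rho_bas_ne bas (fun h => hb (sigma_fst_eq h).1)
  · intro h; exact absurd (Finset.mem_univ i) h

end PathAlgAux2

section PathAlgAux3
set_option linter.unusedSectionVars false
set_option maxHeartbeats 1000000

variable {K : Type u} [Field K]
variable {V : Type u} [Quiver.{u+1} V] [Fintype V]
variable {A : Type u} [Ring A] [Algebra K A]
variable (bas : Module.Basis (Σ (a : V) (b : V), Quiver.Path a b) K A)

open scoped Classical in
private noncomputable def sig (i : V) : Fin (Fintype.card V - 1) ≃ {j : V // j ≠ i} := by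
  refine (Fintype.equivFinOfCardEq ?_).symm
  have h1 : Fintype.card {j : V // ¬ (j = i)} = Fintype.card V - Fintype.card {j : V // j = i} :=
    Fintype.card_subtype_compl _
  rw [Fintype.card_subtype_eq] at h1
  exact h1

private lemma sig_ne (i : V) (k : Fin (Fintype.card V - 1)) : ((sig i k : {j : V // j ≠ i}) : V) ≠ i :=
  (sig i k).2

variable (hmul : ∀ (i j k : V) (p : Quiver.Path i j) (q : Quiver.Path j k),
      bas ⟨i, j, p⟩ * bas ⟨j, k, q⟩ = bas ⟨i, k, p.comp q⟩)
variable (hzero : ∀ (i j j' k : V) (p : Quiver.Path i j) (q : Quiver.Path j' k), j ≠ j' →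
      bas ⟨i, j, p⟩ * bas ⟨j', k, q⟩ = 0)
variable (B' : Subring A)
variable (hB' : B' = (Algebra.adjoin K
      {x : A | ∃ (i j : V) (p : Quiver.Path i j),
        p.length ≠ 0 ∧ x = bas ⟨i, j, p⟩}).toSubring)

include hB'

private lemma mem_pos {a b : V} (p : Quiver.Path a b) (hp : p.length ≠ 0) :
    bas ⟨a, b, p⟩ ∈ B' := by
  rw [hB', Subalgebra.mem_toSubring]
  exact Algebra.subset_adjoin ⟨a, b, p, hp, rfl⟩

private lemma smul_one_mem (c : K) : c • (1 : A) ∈ B' := by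
  rw [hB', Subalgebra.mem_toSubring, ← Algebra.algebraMap_eq_smul_one]
  exact Subalgebra.algebraMap_mem _ c

include hmul hzero

private lemma rho_B'_const {b : A} (hb : b ∈ B') (i j : V) :
    rhoAug bas i b = rhoAug bas j b := by
  rw [hB', Subalgebra.mem_toSubring] at hb
  induction hb using Algebra.adjoin_induction with
  | mem x hx =>
    obtain ⟨a', b', p, hp, rfl⟩ := hx
    rw [rho_bas_ne bas (sigma_nil_ne p hp), rho_bas_ne bas (sigma_nil_ne p hp)]
  | algebraMap c =>
    rw [Algebra.algebraMap_eq_smul_one, rho_smul, rho_smul,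
      rho_one bas hmul hzero, rho_one bas hmul hzero]
  | add x y hx hy hx' hy' => rw [rho_add, rho_add, hx', hy']
  | mul x y hx hy hx' hy' =>
    rw [rho_mul bas hmul hzero, rho_mul bas hmul hzero, hx', hy']

end PathAlgAux3

section Main
set_option linter.unusedSectionVars false
set_option maxHeartbeats 1000000

variable {K : Type u} [Field K]
variable {V : Type u} [Quiver.{u+1} V] [Fintype V]
variable {A : Type u} [Ring A] [Algebra K A]

variable (bas : Module.Basis (Σ (a : V) (b : V), Quiver.Path a b) K A)

private noncomputable def rhoZ (i : V) : A →ₗ[ℤ] K :=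
  LinearMap.restrictScalars ℤ
    ((Finsupp.lapply (⟨i, i, Quiver.Path.nil⟩ : Σ (a : V) (b : V), Quiver.Path a b)).comp
      bas.repr.toLinearMap)

private lemma rhoZ_apply (i : V) (a : A) : rhoZ bas i a = rhoAug bas i a := rfl

private noncomputable def sg (p : V × Fin (Fintype.card V - 1)) : V :=
  ((sig p.1 p.2 : {j : V // j ≠ p.1}) : V)

private lemma sg_ne (p : V × Fin (Fintype.card V - 1)) : sg p ≠ p.1 := (sig p.1 p.2).2

private noncomputable def e0 : (A ⊗[ℤ] A) →ₗ[ℤ] (A × (V × Fin (Fintype.card V - 1) → K)) :=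
  LinearMap.prod (LinearMap.mul' ℤ A)
    (LinearMap.pi fun p => (LinearMap.mul' ℤ K).comp
      (TensorProduct.map (rhoZ bas p.1) (rhoZ bas (sg p))))

private lemma e0_tmul (x y : A) :
    e0 bas (x ⊗ₜ[ℤ] y) =
      (x * y, fun p => rhoAug bas p.1 x * rhoAug bas (sg p) y) := by
  rw [Prod.ext_iff]
  constructor
  · show (LinearMap.mul' ℤ A) (x ⊗ₜ[ℤ] y) = x * y
    simp
  · funext p
    show (LinearMap.mul' ℤ K) (TensorProduct.map (rhoZ bas p.1) (rhoZ bas (sg p)) (x ⊗ₜ[ℤ] y)) = _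
    simp [rhoZ_apply]

private noncomputable def tmulRight (w : A) : A →ₗ[ℤ] (A ⊗[ℤ] A) :=
  (TensorProduct.mk ℤ A A).flip w

private lemma tmulRight_apply (w a : A) : tmulRight w a = a ⊗ₜ[ℤ] w := rfl

private noncomputable def projZ (p : V × Fin (Fintype.card V - 1)) :
    ((V × Fin (Fintype.card V - 1)) → K) →ₗ[ℤ] K :=
  LinearMap.restrictScalars ℤ (LinearMap.proj (R := K) (φ := fun _ => K) p)

private lemma projZ_apply (p : V × Fin (Fintype.card V - 1))
    (c : (V × Fin (Fintype.card V - 1)) → K) : projZ (K := K) p c = c p := rfl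

private noncomputable def Fmap : (A × (V × Fin (Fintype.card V - 1) → K)) →ₗ[ℤ] (A ⊗[ℤ] A) :=
  (tmulRight (1 : A)) ∘ₗ LinearMap.fst ℤ A _ +
    ∑ p : V × Fin (Fintype.card V - 1),
      (tmulRight (bas ⟨sg p, sg p, Quiver.Path.nil⟩)) ∘ₗ
        (LinearMap.smulRight
          ((projZ p) ∘ₗ LinearMap.snd ℤ A _ - (rhoZ bas p.1) ∘ₗ LinearMap.fst ℤ A _)
          (bas ⟨p.1, p.1, Quiver.Path.nil⟩))

private lemma Fmap_apply (a : A) (c : (V × Fin (Fintype.card V - 1)) → K) :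
    Fmap bas (a, c) = a ⊗ₜ[ℤ] 1 +
      ∑ p : V × Fin (Fintype.card V - 1),
        ((c p - rhoAug bas p.1 a) • bas ⟨p.1, p.1, Quiver.Path.nil⟩) ⊗ₜ[ℤ]
          bas ⟨sg p, sg p, Quiver.Path.nil⟩ := by
  simp only [Fmap, LinearMap.add_apply, LinearMap.sum_apply, LinearMap.comp_apply,
    LinearMap.fst_apply, LinearMap.snd_apply, LinearMap.smulRight_apply, LinearMap.sub_apply,
    tmulRight_apply, projZ_apply, rhoZ_apply]

end Main

section Main2
set_option linter.unusedSectionVars false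
set_option maxHeartbeats 1600000

variable {K : Type u} [Field K]
variable {V : Type u} [Quiver.{u+1} V] [Fintype V]
variable {A : Type u} [Ring A] [Algebra K A]
variable (bas : Module.Basis (Σ (a : V) (b : V), Quiver.Path a b) K A)
variable (B' : Subring A)

private noncomputable def mkk : (A ⊗[ℤ] A) →ₗ[ℤ] (CC B' 2 : Type u) :=
  Submodule.mkQ (rel B' 1)

private lemma mkk_surj : Function.Surjective (mkk (A := A) B') := by
  intro x
  obtain ⟨t, rfl⟩ := Submodule.mkQ_surjective (rel B' 1) x
  exact ⟨t, rfl⟩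

private lemma rel_gen (a t : A) {b : A} (hb : b ∈ B') :
    mkk B' ((a * b) ⊗ₜ[ℤ] t) = mkk B' (a ⊗ₜ[ℤ] (b * t)) := by
  show Submodule.Quotient.mk _ = Submodule.Quotient.mk _
  refine (Submodule.Quotient.eq _).2 ?_
  rw [rel_succ]
  exact Submodule.subset_span (Or.inl ⟨a, ⟨b, hb⟩, t, rfl⟩)

private lemma lA_mkk (a x y : A) :
    lA B' a 1 (mkk B' (x ⊗ₜ[ℤ] y)) = mkk B' ((a * x) ⊗ₜ[ℤ] y) := by
  show Submodule.mapQ _ _ _ (rel_le_comap_lmulT B' a 1) (Submodule.Quotient.mk (x ⊗ₜ[ℤ] y)) = _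
  rfl

private lemma rA_mkk (a x y : A) :
    rA B' a 1 (mkk B' (x ⊗ₜ[ℤ] y)) = mkk B' (x ⊗ₜ[ℤ] (y * a)) := by
  show Submodule.mapQ _ _ _ (rel_le_comap_rmulT B' a 1) (Submodule.Quotient.mk (x ⊗ₜ[ℤ] y)) = _
  rfl

variable (hB' : B' = (Algebra.adjoin K
      {x : A | ∃ (i j : V) (p : Quiver.Path i j),
        p.length ≠ 0 ∧ x = bas ⟨i, j, p⟩}).toSubring)

include hB' in
private lemma smul_mkk (c : K) (x y : A) :
    mkk B' ((c • x) ⊗ₜ[ℤ] y) = lA B' (c • (1 : A)) 1 (mkk B' (x ⊗ₜ[ℤ] y)) := by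
  rw [lA_mkk, smul_mul_assoc, one_mul]

include hB' in
private lemma smul_mkk' (c : K) (x y : A) :
    mkk B' (x ⊗ₜ[ℤ] (c • y)) = lA B' (c • (1 : A)) 1 (mkk B' (x ⊗ₜ[ℤ] y)) := by
  rw [lA_mkk, smul_mul_assoc, one_mul]
  have h1 : x ⊗ₜ[ℤ] (c • y) = x ⊗ₜ[ℤ] ((c • (1:A)) * y) := by
    rw [smul_mul_assoc, one_mul]
  have h2 : (c • x) ⊗ₜ[ℤ] y = (x * (c • (1:A))) ⊗ₜ[ℤ] y := by
    rw [mul_smul_comm, mul_one]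
  rw [h1, h2, rel_gen _ _ _ (smul_one_mem bas B' hB' c)]

variable (hmul : ∀ (i j k : V) (p : Quiver.Path i j) (q : Quiver.Path j k),
      bas ⟨i, j, p⟩ * bas ⟨j, k, q⟩ = bas ⟨i, k, p.comp q⟩)
variable (hzero : ∀ (i j j' k : V) (p : Quiver.Path i j) (q : Quiver.Path j' k), j ≠ j' →
      bas ⟨i, j, p⟩ * bas ⟨j', k, q⟩ = 0)

include hmul hzero hB' in
private lemma e0_bal (a t : A) {b : A} (hb : b ∈ B') :
    e0 bas ((a * b) ⊗ₜ[ℤ] t - a ⊗ₜ[ℤ] (b * t)) = 0 := by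
  rw [map_sub, e0_tmul, e0_tmul]
  rw [Prod.ext_iff]
  constructor
  · show (a * b) * t - a * (b * t) = 0
    rw [mul_assoc, sub_self]
  · show (fun p => rhoAug bas p.1 (a * b) * rhoAug bas (sg p) t) -
      (fun p => rhoAug bas p.1 a * rhoAug bas (sg p) (b * t)) = 0
    funext p
    have h1 := rho_mul bas hmul hzero p.1 a b
    have h2 := rho_mul bas hmul hzero (sg p) b t
    have h3 := rho_B'_const bas hmul hzero B' hB' hb p.1 (sg p)
    simp only [Pi.sub_apply, Pi.zero_apply, h1, h2, h3]
    ring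

include hmul hzero hB' in
private lemma hker : (rel B' 1 : Submodule ℤ (A ⊗[ℤ] A)) ≤ LinearMap.ker (e0 bas) := by
  rw [rel_succ]
  refine Submodule.span_le.2 ?_
  rintro x (⟨a, b, t, rfl⟩ | ⟨a, r, hr, rfl⟩)
  · show e0 bas _ = 0
    exact e0_bal bas B' hB' hmul hzero a t b.2
  · have : r = 0 := by simpa [rel] using hr
    subst this
    show e0 bas _ = 0
    have h0 : (a ⊗ₜ[ℤ] (0 : A) : A ⊗[ℤ] A) = 0 := tmul_zero _ a
    exact h0 ▸ (map_zero (e0 bas))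

include hmul hzero hB' in
private noncomputable def ebar : (CC B' 2 : Type u) →ₗ[ℤ]
    (A × (V × Fin (Fintype.card V - 1) → K)) :=
  Submodule.liftQ (rel B' 1) (e0 bas) (hker bas B' hB' hmul hzero)

include hmul hzero hB' in
private lemma ebar_mkk (t : A ⊗[ℤ] A) :
    ebar bas B' hB' hmul hzero (mkk B' t) = e0 bas t := rfl

private noncomputable def gmap : (A × (V × Fin (Fintype.card V - 1) → K)) →ₗ[ℤ]
    (CC B' 2 : Type u) :=
  (mkk B') ∘ₗ (Fmap bas)

private lemma gmap_mkk (w : A × (V × Fin (Fintype.card V - 1) → K)) :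
    gmap bas B' w = mkk B' (Fmap bas w) := rfl

private lemma gmap_pair (a : A) (c : (V × Fin (Fintype.card V - 1)) → K) :
    gmap bas B' (a, c) = mkk B' (a ⊗ₜ[ℤ] 1) +
      ∑ p : V × Fin (Fintype.card V - 1),
        mkk B' (((c p - rhoAug bas p.1 a) • bas ⟨p.1, p.1, Quiver.Path.nil⟩) ⊗ₜ[ℤ]
          bas ⟨sg p, sg p, Quiver.Path.nil⟩) := by
  rw [gmap_mkk, Fmap_apply, map_add, map_sum]

end Main2

section Main3
set_option linter.unusedSectionVars false
set_option maxHeartbeats 1600000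

variable {K : Type u} [Field K]
variable {V : Type u} [Quiver.{u+1} V] [Fintype V]
variable {A : Type u} [Ring A] [Algebra K A]
variable (bas : Module.Basis (Σ (a : V) (b : V), Quiver.Path a b) K A)
variable (B' : Subring A)
variable (hB' : B' = (Algebra.adjoin K
      {x : A | ∃ (i j : V) (p : Quiver.Path i j),
        p.length ≠ 0 ∧ x = bas ⟨i, j, p⟩}).toSubring)
variable (hmul : ∀ (i j k : V) (p : Quiver.Path i j) (q : Quiver.Path j k),
      bas ⟨i, j, p⟩ * bas ⟨j, k, q⟩ = bas ⟨i, k, p.comp q⟩)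
variable (hzero : ∀ (i j j' k : V) (p : Quiver.Path i j) (q : Quiver.Path j' k), j ≠ j' →
      bas ⟨i, j, p⟩ * bas ⟨j', k, q⟩ = 0)

private lemma eps_ne {i j : V} (hij : i ≠ j) :
    rhoAug bas j (bas ⟨i, i, Quiver.Path.nil⟩) = 0 :=
  rho_bas_ne bas (fun h => hij (sigma_fst_eq h).1)

private lemma e0_smul_left (c : K) (x y : A) :
    e0 bas ((c • x) ⊗ₜ[ℤ] y) = c • e0 bas (x ⊗ₜ[ℤ] y) := by
  rw [e0_tmul, e0_tmul]
  rw [Prod.ext_iff]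
  constructor
  · show (c • x) * y = c • (x * y)
    rw [smul_mul_assoc]
  · funext p
    show rhoAug bas p.1 (c • x) * rhoAug bas (sg p) y =
      c * (rhoAug bas p.1 x * rhoAug bas (sg p) y)
    rw [rho_smul]; ring

private lemma e0_smul_right (c : K) (x y : A) :
    e0 bas (x ⊗ₜ[ℤ] (c • y)) = c • e0 bas (x ⊗ₜ[ℤ] y) := by
  rw [e0_tmul, e0_tmul]
  rw [Prod.ext_iff]
  constructor
  · show x * (c • y) = c • (x * y)
    rw [mul_smul_comm]
  · funext p
    show rhoAug bas p.1 x * rhoAug bas (sg p) (c • y) =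
      c * (rhoAug bas p.1 x * rhoAug bas (sg p) y)
    rw [rho_smul]; ring

include hB' in
private lemma gsmul (c : K) (w : A × (V × Fin (Fintype.card V - 1) → K)) :
    gmap bas B' (c • w) = lA B' (c • (1 : A)) 1 (gmap bas B' w) := by
  obtain ⟨a, cc⟩ := w
  have hw : c • ((a, cc) : A × (V × Fin (Fintype.card V - 1) → K)) = (c • a, c • cc) := rfl
  rw [hw, gmap_pair, gmap_pair, map_add, map_sum, ← smul_mkk bas B' hB' c a 1]
  congr 1
  refine Finset.sum_congr rfl fun p _ => ?_
  have h1 : ((c • cc) p - rhoAug bas p.1 (c • a)) = c * (cc p - rhoAug bas p.1 a) := by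
    rw [Pi.smul_apply, smul_eq_mul, rho_smul]; ring
  rw [h1, mul_smul, smul_mkk bas B' hB']

include hmul hzero in
private lemma E0F (a : A) (cc : (V × Fin (Fintype.card V - 1)) → K) :
    e0 bas (Fmap bas (a, cc)) = (a, cc) := by
  classical
  rw [Fmap_apply, map_add, map_sum]
  simp only [e0_tmul]
  rw [Prod.ext_iff]
  constructor
  · rw [Prod.fst_add, Prod.fst_sum]
    show a * 1 + ∑ p : V × Fin (Fintype.card V - 1),
      (((cc p - rhoAug bas p.1 a) • bas ⟨p.1, p.1, Quiver.Path.nil⟩) *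
        bas ⟨sg p, sg p, Quiver.Path.nil⟩) = a
    rw [Finset.sum_eq_zero, mul_one, add_zero]
    intro p _
    rw [smul_mul_assoc, hzero p.1 p.1 (sg p) (sg p) Quiver.Path.nil Quiver.Path.nil
      (Ne.symm (sg_ne p)), smul_zero]
  · rw [Prod.snd_add, Prod.snd_sum]
    funext q
    rw [Pi.add_apply, Finset.sum_apply]
    show rhoAug bas q.1 a * rhoAug bas (sg q) 1 + ∑ p : V × Fin (Fintype.card V - 1),
      rhoAug bas q.1 ((cc p - rhoAug bas p.1 a) • bas ⟨p.1, p.1, Quiver.Path.nil⟩) *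
        rhoAug bas (sg q) (bas ⟨sg p, sg p, Quiver.Path.nil⟩) = cc q
    rw [rho_one bas hmul hzero, Finset.sum_eq_single q]
    · rw [rho_smul, rho_bas_self, rho_bas_self]
      ring
    · rintro ⟨i', k'⟩ _ hpq
      obtain ⟨i'', k''⟩ := q
      by_cases hi : i' = i''
      · subst hi
        have hkk : k' ≠ k'' := fun h => hpq (by rw [h])
        have hsg : sg (i', k') ≠ sg (i', k'') := by
          intro h
          exact hkk ((sig i').injective (Subtype.ext h))
        rw [eps_ne bas hsg, mul_zero]
      · rw [rho_smul, eps_ne bas hi, mul_zero, zero_mul]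
    · intro h; exact absurd (Finset.mem_univ q) h

end Main3

section Main4
set_option linter.unusedSectionVars false
set_option maxHeartbeats 1600000

variable {K : Type u} [Field K]
variable {V : Type u} [Quiver.{u+1} V] [Fintype V]
variable {A : Type u} [Ring A] [Algebra K A]
variable (bas : Module.Basis (Σ (a : V) (b : V), Quiver.Path a b) K A)
variable (B' : Subring A)
variable (hB' : B' = (Algebra.adjoin K
      {x : A | ∃ (i j : V) (p : Quiver.Path i j),
        p.length ≠ 0 ∧ x = bas ⟨i, j, p⟩}).toSubring)
variable (hmul : ∀ (i j k : V) (p : Quiver.Path i j) (q : Quiver.Path j k),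
      bas ⟨i, j, p⟩ * bas ⟨j, k, q⟩ = bas ⟨i, k, p.comp q⟩)
variable (hzero : ∀ (i j j' k : V) (p : Quiver.Path i j) (q : Quiver.Path j' k), j ≠ j' →
      bas ⟨i, j, p⟩ * bas ⟨j', k, q⟩ = 0)

private lemma gmap_e0_vanish (u v : A)
    (h : ∀ p' : V × Fin (Fintype.card V - 1),
      rhoAug bas p'.1 u * rhoAug bas (sg p') v - rhoAug bas p'.1 (u * v) = 0) :
    gmap bas B' (e0 bas (u ⊗ₜ[ℤ] v)) = mkk B' ((u * v) ⊗ₜ[ℤ] (1 : A)) := by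
  rw [e0_tmul, gmap_pair]
  simp only [h, zero_smul, TensorProduct.zero_tmul, map_zero, Finset.sum_const_zero, add_zero]

include hmul hzero hB' in
private lemma GE_bas (t t' : Σ (a : V) (b : V), Quiver.Path a b) :
    gmap bas B' (e0 bas (bas t ⊗ₜ[ℤ] bas t')) = mkk B' (bas t ⊗ₜ[ℤ] bas t') := by
  classical
  obtain ⟨a, b, p⟩ := t
  obtain ⟨c, d, q⟩ := t'
  cases q with
  | cons q0 f =>
    have hvmem : bas ⟨c, d, q0.cons f⟩ ∈ B' := mem_pos bas B' hB' _ (by simp)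
    have hv : ∀ i, rhoAug bas i (bas ⟨c, d, q0.cons f⟩) = 0 := fun i =>
      rho_bas_ne bas (sigma_nil_ne _ (by simp))
    rw [gmap_e0_vanish bas B' _ _ (fun p' => by
      rw [rho_mul bas hmul hzero, hv, hv]; ring)]
    have e2 := rel_gen B' (bas ⟨a, b, p⟩) (1 : A) hvmem
    rw [mul_one] at e2
    exact e2
  | nil =>
    cases p with
    | cons p0 f =>
      have humem : bas ⟨a, b, p0.cons f⟩ ∈ B' := mem_pos bas B' hB' _ (by simp)
      have hu : ∀ i, rhoAug bas i (bas ⟨a, b, p0.cons f⟩) = 0 := fun i =>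
        rho_bas_ne bas (sigma_nil_ne _ (by simp))
      rw [gmap_e0_vanish bas B' _ _ (fun p' => by
        rw [rho_mul bas hmul hzero, hu]; ring)]
      have e1 := rel_gen B' (1 : A) (1 : A) humem
      rw [one_mul, mul_one] at e1
      have e2 := rel_gen B' (1 : A) (bas ⟨c, c, Quiver.Path.nil⟩) humem
      rw [one_mul] at e2
      by_cases hbc : b = c
      · subst hbc
        have hue : bas ⟨a, b, p0.cons f⟩ * bas ⟨b, b, Quiver.Path.nil⟩ =
            bas ⟨a, b, p0.cons f⟩ := by
          rw [hmul, Quiver.Path.comp_nil]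
        rw [hue, e1, e2, hue]
      · have hue : bas ⟨a, b, p0.cons f⟩ * bas ⟨c, c, Quiver.Path.nil⟩ = 0 :=
          hzero _ _ _ _ _ _ hbc
        rw [hue, e2, hue, TensorProduct.tmul_zero, TensorProduct.zero_tmul, map_zero]
    | nil =>
      by_cases hac : a = c
      · subst hac
        have hee : bas ⟨a, a, (Quiver.Path.nil : Quiver.Path a a)⟩ *
            bas ⟨a, a, (Quiver.Path.nil : Quiver.Path a a)⟩ =
            bas ⟨a, a, (Quiver.Path.nil : Quiver.Path a a)⟩ := by
          rw [hmul, Quiver.Path.comp_nil]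
        rw [e0_tmul, gmap_pair, hee]
        have hco : ∀ p' : V × Fin (Fintype.card V - 1),
            rhoAug bas p'.1 (bas ⟨a, a, Quiver.Path.nil⟩) *
              rhoAug bas (sg p') (bas ⟨a, a, Quiver.Path.nil⟩) -
              rhoAug bas p'.1 (bas ⟨a, a, Quiver.Path.nil⟩) =
            -(rhoAug bas p'.1 (bas ⟨a, a, Quiver.Path.nil⟩)) := by
          intro p'
          by_cases hia : p'.1 = a
          · have h2 : rhoAug bas (sg p') (bas ⟨a, a, Quiver.Path.nil⟩) = 0 := by
              refine eps_ne bas ?_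
              rw [← hia]
              exact (sg_ne p').symm
            rw [h2]; ring
          · have h1 : rhoAug bas p'.1 (bas ⟨a, a, Quiver.Path.nil⟩) = 0 :=
              eps_ne bas (fun h => hia h.symm)
            rw [h1]; ring
        simp only [hco]
        rw [Fintype.sum_prod_type, Finset.sum_eq_single a]
        · simp only [rho_bas_self, neg_smul, one_smul, TensorProduct.neg_tmul, map_neg]
          rw [Finset.sum_neg_distrib]
          simp only [sg]
          rw [Equiv.sum_comp (sig a) (fun s : {j : V // j ≠ a} =>
            mkk B' (bas ⟨a, a, Quiver.Path.nil⟩ ⊗ₜ[ℤ] bas ⟨s.val, s.val, Quiver.Path.nil⟩))]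
          rw [← Finset.sum_subtype (Finset.univ.erase a) (fun x => by simp)
            (fun j : V => mkk B' (bas ⟨a, a, Quiver.Path.nil⟩ ⊗ₜ[ℤ]
              bas ⟨j, j, Quiver.Path.nil⟩))]
          rw [hone bas hmul hzero, TensorProduct.tmul_sum, map_sum]
          rw [← Finset.sum_erase_add Finset.univ
            (fun j : V => mkk B' (bas ⟨a, a, Quiver.Path.nil⟩ ⊗ₜ[ℤ]
              bas ⟨j, j, Quiver.Path.nil⟩)) (Finset.mem_univ a)]
          abel
        · intro i' _ hia
          rw [Finset.sum_eq_zero]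
          intro k' _
          rw [eps_ne bas (fun h => hia h.symm), neg_zero, zero_smul,
            TensorProduct.zero_tmul, map_zero]
        · intro h; exact absurd (Finset.mem_univ a) h
      · have hca : c ≠ a := fun h => hac h.symm
        have hue : bas ⟨a, a, (Quiver.Path.nil : Quiver.Path a a)⟩ *
            bas ⟨c, c, (Quiver.Path.nil : Quiver.Path c c)⟩ = 0 :=
          hzero _ _ _ _ _ _ hac
        rw [e0_tmul, gmap_pair, hue]
        simp only [rho_zero, sub_zero, TensorProduct.zero_tmul, map_zero, zero_add]
        rw [Finset.sum_eq_single ((a, (sig a).symm ⟨c, hca⟩) : V × Fin (Fintype.card V - 1))]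
        · have hsg : sg ((a, (sig a).symm ⟨c, hca⟩) : V × Fin (Fintype.card V - 1)) = c := by
            show ((sig a ((sig a).symm ⟨c, hca⟩) : {j : V // j ≠ a}) : V) = c
            rw [Equiv.apply_symm_apply]
          rw [hsg]
          rw [rho_bas_self, rho_bas_self]
          norm_num
        · rintro ⟨i', k'⟩ _ hpq
          by_cases hia : i' = a
          · subst hia
            by_cases hsg : sg (i', k') = c
            · exfalso
              have h1 : sig i' k' = (⟨c, hca⟩ : {j : V // j ≠ i'}) := Subtype.ext hsg
              have h2 : k' = (sig i').symm ⟨c, hca⟩ := by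
                rw [← h1, Equiv.symm_apply_apply]
              exact hpq (by rw [h2])
            · rw [eps_ne bas (fun h => hsg h.symm), mul_zero, zero_smul,
                TensorProduct.zero_tmul, map_zero]
          · rw [eps_ne bas (fun h => hia h.symm), zero_mul, zero_smul,
              TensorProduct.zero_tmul, map_zero]
        · intro h; exact absurd (Finset.mem_univ _) h

end Main4

section Main5
set_option linter.unusedSectionVars false
set_option maxHeartbeats 1600000

variable {K : Type u} [Field K]
variable {V : Type u} [Quiver.{u+1} V] [Fintype V]
variable {A : Type u} [Ring A] [Algebra K A]
variable (bas : Module.Basis (Σ (a : V) (b : V), Quiver.Path a b) K A)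
variable (B' : Subring A)
variable (hB' : B' = (Algebra.adjoin K
      {x : A | ∃ (i j : V) (p : Quiver.Path i j),
        p.length ≠ 0 ∧ x = bas ⟨i, j, p⟩}).toSubring)
variable (hmul : ∀ (i j k : V) (p : Quiver.Path i j) (q : Quiver.Path j k),
      bas ⟨i, j, p⟩ * bas ⟨j, k, q⟩ = bas ⟨i, k, p.comp q⟩)
variable (hzero : ∀ (i j j' k : V) (p : Quiver.Path i j) (q : Quiver.Path j' k), j ≠ j' →
      bas ⟨i, j, p⟩ * bas ⟨j', k, q⟩ = 0)

include hmul hzero hB' in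
private lemma GE (t : A ⊗[ℤ] A) : gmap bas B' (e0 bas t) = mkk B' t := by
  induction t using TensorProduct.induction_on with
  | zero => rw [map_zero, map_zero, map_zero]
  | add x y hx hy => rw [map_add, map_add, map_add, hx, hy]
  | tmul x y =>
    induction x using basis_ind bas with
    | h0 => rw [TensorProduct.zero_tmul, map_zero, map_zero, map_zero]
    | hadd u u' hu hu' => rw [TensorProduct.add_tmul, map_add, map_add, map_add, hu, hu']
    | hsmul c u hu =>
      rw [e0_smul_left, gsmul bas B' hB', hu, lA_mkk, smul_mul_assoc, one_mul]
    | hb s =>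
      induction y using basis_ind bas with
      | h0 => rw [TensorProduct.tmul_zero, map_zero, map_zero, map_zero]
      | hadd v v' hv hv' => rw [TensorProduct.tmul_add, map_add, map_add, map_add, hv, hv']
      | hsmul c v hv =>
        rw [e0_smul_right, gsmul bas B' hB', hv, lA_mkk, smul_mul_assoc, one_mul,
          smul_mkk bas B' hB', smul_mkk' bas B' hB']
      | hb s' => exact GE_bas bas B' hB' hmul hzero s s'

include hmul hzero hB' in
private lemma hlA (a : A) (x : (CC B' 2 : Type u)) :
    ebar bas B' hB' hmul hzero (lA B' a 1 x) =
      (a * (ebar bas B' hB' hmul hzero x).1,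
        fun p => rhoAug bas p.1 a * (ebar bas B' hB' hmul hzero x).2 p) := by
  obtain ⟨t, rfl⟩ := mkk_surj B' x
  induction t using TensorProduct.induction_on with
  | zero =>
    rw [map_zero, map_zero, map_zero]
    rw [Prod.ext_iff]
    constructor
    · simp
    · funext p
      simp
  | add t1 t2 h1 h2 =>
    rw [map_add, map_add, map_add, map_add, h1, h2]
    rw [Prod.ext_iff]
    constructor
    · simp [mul_add]
    · funext p
      simp [mul_add]
  | tmul x y =>
    rw [lA_mkk, ebar_mkk, ebar_mkk, e0_tmul, e0_tmul]
    rw [Prod.ext_iff]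
    constructor
    · show (a * x) * y = a * (x * y)
      rw [mul_assoc]
    · funext p
      show rhoAug bas p.1 (a * x) * rhoAug bas (sg p) y =
        rhoAug bas p.1 a * (rhoAug bas p.1 x * rhoAug bas (sg p) y)
      rw [rho_mul bas hmul hzero]; ring

include hmul hzero hB' in
private lemma hrA {b : A} (hb : b ∈ B') (x : (CC B' 2 : Type u)) :
    ebar bas B' hB' hmul hzero (rA B' b 1 x) =
      ((ebar bas B' hB' hmul hzero x).1 * b,
        fun p => (ebar bas B' hB' hmul hzero x).2 p * rhoAug bas p.1 b) := by
  obtain ⟨t, rfl⟩ := mkk_surj B' x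
  induction t using TensorProduct.induction_on with
  | zero =>
    rw [map_zero, map_zero, map_zero]
    rw [Prod.ext_iff]
    constructor
    · simp
    · funext p
      simp
  | add t1 t2 h1 h2 =>
    rw [map_add, map_add, map_add, map_add, h1, h2]
    rw [Prod.ext_iff]
    constructor
    · simp [add_mul]
    · funext p
      simp [add_mul]
  | tmul x y =>
    rw [rA_mkk, ebar_mkk, ebar_mkk, e0_tmul, e0_tmul]
    rw [Prod.ext_iff]
    constructor
    · show x * (y * b) = (x * y) * b
      rw [mul_assoc]
    · funext p
      show rhoAug bas p.1 x * rhoAug bas (sg p) (y * b) =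
        (rhoAug bas p.1 x * rhoAug bas (sg p) y) * rhoAug bas p.1 b
      rw [rho_mul bas hmul hzero, rho_B'_const bas hmul hzero B' hB' hb p.1 (sg p)]
      ring

end Main5

/-- For the primary arrow subalgebra `B = K·1 + rad A` of the path
algebra `A = KQ` of a finite connected acyclic quiver with `n` vertices, there is an
isomorphism of `A`-`B`-bimodules `A ⊗_B A ≅ A ⊕ ⨁_{i} (n-1)·(ᵢK_ε)`, where `A` acts on
the copy `(i, j)` of `K` via the augmentation `ρ_i` and `B` acts via its augmentation
`ε` (which agrees with every `ρ_i` on `B`).  In particular the same decomposition holds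
as `B`-`B`-bimodules (with `n(n-1)` copies of `_εK_ε`). -/

theorem tensor_square_arrow_subalgebra
    (K : Type u) [Field K] [IsAlgClosed K]
    (V : Type u) [Quiver.{u+1} V] [Fintype V] [∀ a b : V, Finite (a ⟶ b)]
    (hacyclic : ∀ (a : V) (p : Quiver.Path a a), p = Quiver.Path.nil)
    (hconn : Subsingleton (Quiver.WeaklyConnectedComponent V)) (hne : Nonempty V)
    (A : Type u) [Ring A] [Algebra K A]
    (bas : Module.Basis (Σ (a : V) (b : V), Quiver.Path a b) K A)
    (hmul : ∀ (i j k : V) (p : Quiver.Path i j) (q : Quiver.Path j k),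
      bas ⟨i, j, p⟩ * bas ⟨j, k, q⟩ = bas ⟨i, k, p.comp q⟩)
    (hzero : ∀ (i j j' k : V) (p : Quiver.Path i j) (q : Quiver.Path j' k), j ≠ j' →
      bas ⟨i, j, p⟩ * bas ⟨j', k, q⟩ = 0)
    (B' : Subring A)
    (hB' : B' = (Algebra.adjoin K
      {x : A | ∃ (i j : V) (p : Quiver.Path i j),
        p.length ≠ 0 ∧ x = bas ⟨i, j, p⟩}).toSubring) :
    (∃ e : (CC B' 2 : Type u) ≃ₗ[ℤ] (A × (V × Fin (Fintype.card V - 1) → K)),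
      (∀ (a : A) (x : (CC B' 2 : Type u)), e (lA B' a 1 x) =
        (a * (e x).1, fun p => rhoAug bas p.1 a * (e x).2 p)) ∧
      (∀ (b : ↥B') (x : (CC B' 2 : Type u)), e (rB B' b 2 x) =
        ((e x).1 * (b : A), fun p => (e x).2 p * rhoAug bas p.1 (b : A)))) ∧
    (∃ e : (CC B' 2 : Type u) ≃ₗ[ℤ] (A × (V × Fin (Fintype.card V - 1) → K)),
      (∀ (b : ↥B') (x : (CC B' 2 : Type u)), e (lB B' b 2 x) =
        ((b : A) * (e x).1, fun p => rhoAug bas p.1 (b : A) * (e x).2 p)) ∧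
      (∀ (b : ↥B') (x : (CC B' 2 : Type u)), e (rB B' b 2 x) =
        ((e x).1 * (b : A), fun p => (e x).2 p * rhoAug bas p.1 (b : A)))) := by
  classical
  have h1 : (ebar bas B' hB' hmul hzero).comp (gmap bas B') = LinearMap.id := by
    apply LinearMap.ext
    rintro ⟨a, cc⟩
    show ebar bas B' hB' hmul hzero (gmap bas B' (a, cc)) = (a, cc)
    rw [gmap_mkk, ebar_mkk]
    exact E0F bas hmul hzero a cc
  have h2 : (gmap bas B').comp (ebar bas B' hB' hmul hzero) = LinearMap.id := by
    apply LinearMap.ext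
    intro x
    obtain ⟨t, rfl⟩ := mkk_surj B' x
    show gmap bas B' (ebar bas B' hB' hmul hzero (mkk B' t)) = mkk B' t
    rw [ebar_mkk]
    exact GE bas B' hB' hmul hzero t
  let e : (CC B' 2 : Type u) ≃ₗ[ℤ] (A × (V × Fin (Fintype.card V - 1) → K)) :=
    LinearEquiv.ofLinear (ebar bas B' hB' hmul hzero) (gmap bas B') h1 h2
  have he : ∀ x : (CC B' 2 : Type u), e x = ebar bas B' hB' hmul hzero x := fun _ => rfl
  have hl : ∀ (a : A) (x : (CC B' 2 : Type u)), e (lA B' a 1 x) =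
      (a * (e x).1, fun p => rhoAug bas p.1 a * (e x).2 p) := by
    intro a x
    rw [he, he]
    exact hlA bas B' hB' hmul hzero a x
  have hr : ∀ (b : ↥B') (x : (CC B' 2 : Type u)), e (rB B' b 2 x) =
      ((e x).1 * (b : A), fun p => (e x).2 p * rhoAug bas p.1 (b : A)) := by
    intro b x
    rw [he, he]
    exact hrA bas B' hB' hmul hzero b.2 x
  refine ⟨⟨e, hl, hr⟩, e, ?_, hr⟩
  intro b x
  exact hl (b : A) x
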